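/- Let h(S) = (Σ_{i∈S} a_i)/(b0 + Σ_{i∈S} b_i) with b0 > 0, a_i ≥ 0, b_i > 0. Then h is monotone nondecreasing over all subsets of N (h(S) ≤ h(T) whenever S ⊆ T ⊆ N) if and only if min_{i∈N} (a_i/b_i) ≥ h(N). -/
import Mathlib


theorem stmt_3 {ι : Type*} [DecidableEq ι] (N : Finset ι) (hN : N.Nonempty)
    (a b : ι → ℝ) (b0 : ℝ)
    (hb0 : 0 < b0) (ha : ∀ i ∈ N, 0 ≤ a i) (hb : ∀ i ∈ N, 0 < b i)
    (h : Finset ι → ℝ)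
    (hdef : ∀ S : Finset ι, h S = (∑ i ∈ S, a i) / (b0 + ∑ i ∈ S, b i)) :
    (∀ S T : Finset ι, S ⊆ T → T ⊆ N → h S ≤ h T) ↔
      h N ≤ N.inf' hN (fun i => a i / b i) := by
  have hBpos : ∀ S : Finset ι, S ⊆ N → 0 < b0 + ∑ i ∈ S, b i := by
    intro S hS
    have : (0:ℝ) ≤ ∑ i ∈ S, b i :=
      Finset.sum_nonneg fun i hi => (hb i (hS hi)).le
    linarith
  constructor
  · intro hmono
    rw [hdef, Finset.le_inf'_iff]
    intro i hi
    have h1 := hmono (N.erase i) N (Finset.erase_subset _ _) subset_rfl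
    rw [hdef, hdef] at h1
    have hbi := hb i hi
    have hai := ha i hi
    have hBN := hBpos N subset_rfl
    have hBN' := hBpos (N.erase i) (Finset.erase_subset _ _)
    rw [div_le_div_iff₀ hBN' hBN] at h1
    rw [div_le_div_iff₀ hBN hbi]
    have hsa : a i + ∑ j ∈ N.erase i, a j = ∑ j ∈ N, a j :=
      Finset.add_sum_erase _ _ hi
    have hsb : b i + ∑ j ∈ N.erase i, b j = ∑ j ∈ N, b j :=
      Finset.add_sum_erase _ _ hi
    rw [← hsa, ← hsb] at h1 ⊢
    nlinarith [h1]
  · intro hr S T hST hTN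
    set r := N.inf' hN (fun i => a i / b i) with hrdef
    have hSN : S ⊆ N := hST.trans hTN
    have hrb : ∀ i ∈ N, r * b i ≤ a i := by
      intro i hi
      have h1 : r ≤ a i / b i := Finset.inf'_le _ hi
      have hbi := hb i hi
      calc r * b i ≤ (a i / b i) * b i := by
            exact mul_le_mul_of_nonneg_right h1 hbi.le
        _ = a i := div_mul_cancel₀ _ hbi.ne'
    have claim1 : ∀ U : Finset ι, U ⊆ N →
        r * (∑ i ∈ U, b i) ≤ ∑ i ∈ U, a i := by
      intro U hU
      rw [Finset.mul_sum]
      exact Finset.sum_le_sum fun i hi => hrb i (hU hi)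
    have hAN : (∑ i ∈ N, a i) ≤ r * (b0 + ∑ i ∈ N, b i) := by
      have := hr
      rw [hdef] at this
      have hBN := hBpos N subset_rfl
      calc (∑ i ∈ N, a i)
          = ((∑ i ∈ N, a i) / (b0 + ∑ i ∈ N, b i)) * (b0 + ∑ i ∈ N, b i) := by
            field_simp
        _ ≤ r * (b0 + ∑ i ∈ N, b i) := mul_le_mul_of_nonneg_right this hBN.le
    have claim2 : ∀ U : Finset ι, U ⊆ N →
        (∑ i ∈ U, a i) ≤ r * (b0 + ∑ i ∈ U, b i) := by
      intro U hU
      have hsa : ∑ i ∈ N \ U, a i + ∑ i ∈ U, a i = ∑ i ∈ N, a i :=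
        Finset.sum_sdiff hU
      have hsb : ∑ i ∈ N \ U, b i + ∑ i ∈ U, b i = ∑ i ∈ N, b i :=
        Finset.sum_sdiff hU
      have h2 := claim1 (N \ U) (Finset.sdiff_subset)
      rw [← hsa, ← hsb] at hAN
      nlinarith [hAN, h2]
    -- now the main goal
    rw [hdef, hdef]
    have hBS := hBpos S hSN
    have hBT := hBpos T hTN
    rw [div_le_div_iff₀ hBS hBT]
    have hsa : ∑ i ∈ T \ S, a i + ∑ i ∈ S, a i = ∑ i ∈ T, a i :=
      Finset.sum_sdiff hST
    have hsb : ∑ i ∈ T \ S, b i + ∑ i ∈ S, b i = ∑ i ∈ T, b i :=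
      Finset.sum_sdiff hST
    have hU1 := claim1 (T \ S) (Finset.sdiff_subset.trans hTN)
    have hS2 := claim2 S hSN
    have hBUnn : (0:ℝ) ≤ ∑ i ∈ T \ S, b i :=
      Finset.sum_nonneg fun i hi => (hb i (hTN (Finset.sdiff_subset hi))).le
    rw [← hsa, ← hsb]
    nlinarith [mul_le_mul_of_nonneg_right hS2 hBUnn,
      mul_le_mul_of_nonneg_right hU1 hBS.le]
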